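/- Let f : ℝ^N → ℝ ∪ {+∞} be a Borel function satisfying assumption (HF), and let ξ ∈ ℝ^N, k ∈ {1,…,N}, ξ₁,…,ξ_{k+1} ∈ ℝ^N and strictly positive reals α₁,…,α_{k+1} be such that Σᵢ αᵢ = 1, Σᵢ αᵢ ξᵢ = ξ and Σᵢ αᵢ f(ξᵢ) = f**(ξ). Then f(ξᵢ) = f**(ξᵢ) for every i = 1,…,k+1, and there exists a vector a ∈ ℝ^N such that a belongs to the subdifferential ∂f**(ξ) and to ∂f**(ξᵢ) for every i = 1,…,k+1. -/

import Mathlib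

open MeasureTheory Set Filter Topology RealInnerProductSpace
open scoped Classical

noncomputable section

/-- `ℝ^N` with the Euclidean structure. -/
abbrev Euc (N : ℕ) : Type := EuclideanSpace ℝ (Fin N)

/-- The lower semicontinuous convex envelope `f**` of `f : ℝ^N → ℝ ∪ {+∞}`:
the pointwise supremum of all affine minorants of `f`. -/
def convEnv {N : ℕ} (f : Euc N → EReal) (ξ : Euc N) : EReal :=
  sSup {y : EReal | ∃ (a : Euc N) (b : ℝ),
    (∀ ζ : Euc N, ((⟪a, ζ⟫ + b : ℝ) : EReal) ≤ f ζ) ∧ y = ((⟪a, ξ⟫ + b : ℝ) : EReal)}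

/-- Condition (HF)(ii) = (HF')(ii): for every `ξ` either `f**(ξ) = f(ξ)` or `ξ` is a strictly
positive convex combination of `k+1` points where the value of `f` averages to `f**(ξ)` and
whose linear span has dimension `k`, for some `k ∈ {1, …, N}`. -/
def HFii {N : ℕ} (f : Euc N → EReal) : Prop :=
  ∀ ξ : Euc N, convEnv f ξ = f ξ ∨
    ∃ k : ℕ, 1 ≤ k ∧ k ≤ N ∧
      ∃ (ξs : Fin (k + 1) → Euc N) (α : Fin (k + 1) → ℝ),
        (∀ i, 0 < α i) ∧ (∑ i, α i = 1) ∧ (∑ i, α i • ξs i = ξ) ∧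
        (∑ i, ((α i : EReal) * f (ξs i)) = convEnv f ξ) ∧
        Module.finrank ℝ (Submodule.span ℝ (Set.range ξs)) = k

/-- Condition (HF)(iii) = (HF')(iii): for every `R > 0` there are `N+1` points containing the
ball `B̄(0,R)` in the closed convex hull of them, at which `f` is finite and agrees with `f**`. -/
def HFiii {N : ℕ} (f : Euc N → EReal) : Prop :=
  ∀ R : ℝ, 0 < R → ∃ ζs : Fin (N + 1) → Euc N,
    Metric.closedBall (0 : Euc N) R ⊆ closure (convexHull ℝ (Set.range ζs)) ∧
    ∀ j, f (ζs j) = convEnv f (ζs j) ∧ f (ζs j) ≠ ⊤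

/-- Assumption (HF): linear growth from below, plus (HF)(ii) and (HF)(iii). -/
def HF {N : ℕ} (f : Euc N → EReal) : Prop :=
  (∃ c₁ : ℝ, 0 < c₁ ∧ ∃ c₂ : ℝ, ∀ ζ : Euc N, ((c₁ * ‖ζ‖ + c₂ : ℝ) : EReal) ≤ f ζ) ∧
  HFii f ∧ HFiii f

/-- The subdifferential of an `EReal`-valued function at `ξ`. -/
def subdiffE {N : ℕ} (F : Euc N → EReal) (ξ : Euc N) : Set (Euc N) :=
  {a | ∀ ζ : Euc N, F ξ + ((⟪a, ζ - ξ⟫ : ℝ) : EReal) ≤ F ζ}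

/-! ### Auxiliary lemmas -/

lemma exists_subgradient {N : ℕ} (g : Euc N → ℝ) (hconv : ConvexOn ℝ Set.univ g)
    (ξ : Euc N) : ∃ a : Euc N, ∀ ζ, g ξ + ⟪a, ζ - ξ⟫ ≤ g ζ := by
  have hcont : Continuous g :=
    continuousOn_univ.mp (hconv.continuousOn isOpen_univ)
  set S : Set (Euc N × ℝ) := {p | g p.1 < p.2} with hS
  have hSopen : IsOpen S := isOpen_lt (hcont.comp continuous_fst) continuous_snd
  have hSconv : Convex ℝ S := by
    rintro p hp q hq a b ha hb hab
    have h1 : g (a • p.1 + b • q.1) ≤ a * g p.1 + b * g q.1 :=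
      hconv.2 (mem_univ _) (mem_univ _) ha hb hab
    have hp' : g p.1 < p.2 := hp
    have hq' : g q.1 < q.2 := hq
    show g (a • p + b • q).1 < (a • p + b • q).2
    have : (a • p + b • q).1 = a • p.1 + b • q.1 := rfl
    rw [this]
    have h2 : (a • p + b • q).2 = a * p.2 + b * q.2 := rfl
    rw [h2]
    rcases eq_or_lt_of_le ha with h | h
    · have hb1 : b = 1 := by linarith
      subst hb1; simp [← h] at h1 ⊢; linarith
    · have e1 : a * g p.1 < a * p.2 := by exact mul_lt_mul_of_pos_left hp' h
      have e2 : b * g q.1 ≤ b * q.2 := mul_le_mul_of_nonneg_left hq'.le hb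
      linarith
  have hx : ((ξ, g ξ) : Euc N × ℝ) ∉ S := by simp [hS]
  obtain ⟨L, hL⟩ := geometric_hahn_banach_open_point hSconv hSopen hx
  set c : ℝ := L (0, 1) with hc
  have hdec : ∀ (x : Euc N) (t : ℝ), L (x, t) = L (x, 0) + t * c := by
    intro x t
    have : ((x, t) : Euc N × ℝ) = (x, 0) + t • (0, 1) := by
      simp [Prod.ext_iff]
    rw [this, map_add, L.map_smul, smul_eq_mul]
  have hcneg : c < 0 := by
    have h1 := hL (ξ, g ξ + 1) (by simp [hS])
    rw [hdec ξ (g ξ + 1), hdec ξ (g ξ)] at h1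
    linarith
  have key : ∀ ζ : Euc N, L (ζ, g ζ) ≤ L (ξ, g ξ) := by
    intro ζ
    have hcont2 : ContinuousAt (fun t : ℝ => L (ζ, t)) (g ζ) :=
      (L.continuous.comp (Continuous.prodMk_right ζ)).continuousAt
    have ht : Tendsto (fun t : ℝ => L (ζ, t)) (𝓝[>] (g ζ)) (𝓝 (L (ζ, g ζ))) :=
      hcont2.tendsto.mono_left nhdsWithin_le_nhds
    refine le_of_tendsto ht ?_
    filter_upwards [self_mem_nhdsWithin] with t htt
    exact (hL (ζ, t) htt).le
  set a₀ : Euc N := (InnerProductSpace.toDual ℝ (Euc N)).symm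
      (L.comp (ContinuousLinearMap.inl ℝ (Euc N) ℝ)) with ha₀def
  have ha₀ : ∀ x : Euc N, ⟪a₀, x⟫ = L (x, 0) := by
    intro x
    rw [ha₀def, InnerProductSpace.toDual_symm_apply]
    simp
  refine ⟨(-c)⁻¹ • a₀, fun ζ => ?_⟩
  have hkey := key ζ
  rw [hdec ζ (g ζ), hdec ξ (g ξ), ← ha₀ ζ, ← ha₀ ξ] at hkey
  have h1 : ⟪a₀, ζ⟫ - ⟪a₀, ξ⟫ ≤ (-c) * (g ζ - g ξ) := by linarith
  have hd : (0:ℝ) < -c := by linarith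
  have h2 : ⟪(-c)⁻¹ • a₀, ζ - ξ⟫ = (-c)⁻¹ * (⟪a₀, ζ⟫ - ⟪a₀, ξ⟫) := by
    rw [real_inner_smul_left, inner_sub_right]
  rw [h2]
  have h3 : (-c)⁻¹ * (⟪a₀, ζ⟫ - ⟪a₀, ξ⟫) ≤ (-c)⁻¹ * ((-c) * (g ζ - g ξ)) :=
    mul_le_mul_of_nonneg_left h1 (inv_nonneg.2 hd.le)
  rw [inv_mul_cancel_left₀ hd.ne'] at h3
  linarith

lemma convEnv_le {N : ℕ} (f : Euc N → EReal) (ξ : Euc N) : convEnv f ξ ≤ f ξ := by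
  refine sSup_le ?_
  rintro y ⟨a, b, hab, rfl⟩
  exact hab ξ

lemma affine_le_convEnv {N : ℕ} (f : Euc N → EReal) (a : Euc N) (b : ℝ)
    (hab : ∀ ζ : Euc N, ((⟪a, ζ⟫ + b : ℝ) : EReal) ≤ f ζ) (ξ : Euc N) :
    ((⟪a, ξ⟫ + b : ℝ) : EReal) ≤ convEnv f ξ :=
  le_sSup ⟨a, b, hab, rfl⟩

lemma convEnv_ne_bot {N : ℕ} (f : Euc N → EReal) (c₁ c₂ : ℝ) (hc₁ : 0 < c₁)
    (hgrowth : ∀ ζ : Euc N, ((c₁ * ‖ζ‖ + c₂ : ℝ) : EReal) ≤ f ζ) (ξ : Euc N) :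
    convEnv f ξ ≠ ⊥ := by
  have h0 : ∀ ζ : Euc N, ((⟪(0 : Euc N), ζ⟫ + c₂ : ℝ) : EReal) ≤ f ζ := by
    intro ζ
    refine le_trans ?_ (hgrowth ζ)
    rw [EReal.coe_le_coe_iff, inner_zero_left]
    have : 0 ≤ c₁ * ‖ζ‖ := by positivity
    linarith
  have := affine_le_convEnv f 0 c₂ h0 ξ
  intro h
  rw [h, le_bot_iff] at this
  exact EReal.coe_ne_bot _ this

lemma convEnv_ne_top {N : ℕ} (f : Euc N → EReal) (hfbot : ∀ ζ, f ζ ≠ ⊥)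
    (ξ : Euc N) (ζs : Fin (N + 1) → Euc N)
    (hball : Metric.closedBall (0 : Euc N) (‖ξ‖ + 1) ⊆ closure (convexHull ℝ (Set.range ζs)))
    (hfin : ∀ j, f (ζs j) ≠ ⊤) :
    convEnv f ξ ≠ ⊤ := by
  have hcompact : IsCompact (convexHull ℝ (Set.range ζs)) :=
    (Set.finite_range ζs).isCompact_convexHull (𝕜 := ℝ)
  have hξmem : ξ ∈ convexHull ℝ (Set.range ζs) := by
    have h1 : ξ ∈ Metric.closedBall (0 : Euc N) (‖ξ‖ + 1) := by
      simp [Metric.mem_closedBall]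
    have := hball h1
    rwa [hcompact.isClosed.closure_eq] at this
  have hne : (Finset.univ : Finset (Fin (N + 1))).Nonempty := ⟨0, Finset.mem_univ 0⟩
  set M : ℝ := Finset.univ.sup' hne (fun j => (f (ζs j)).toReal) with hM
  have hle : convEnv f ξ ≤ (M : EReal) := by
    refine sSup_le ?_
    rintro y ⟨a, b, hab, rfl⟩
    have hconvl : ConvexOn ℝ (convexHull ℝ (Set.range ζs)) (fun x => ⟪a, x⟫ + b) := by
      refine ⟨convex_convexHull _ _, ?_⟩
      intro x _ y _ p q hp hq hpq
      have : ⟪a, p • x + q • y⟫ = p * ⟪a, x⟫ + q * ⟪a, y⟫ := by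
        rw [inner_add_right, real_inner_smul_right, real_inner_smul_right]
      simp only [this, smul_eq_mul]
      have hb : p * b + q * b = b := by rw [← add_mul, hpq, one_mul]
      linarith
    obtain ⟨z, hz, hlez⟩ := hconvl.exists_ge_of_mem_convexHull (subset_convexHull ℝ _) hξmem
    obtain ⟨j, rfl⟩ := hz
    have h2 : ((⟪a, ζs j⟫ + b : ℝ) : EReal) ≤ f (ζs j) := hab (ζs j)
    have h3 : f (ζs j) = (((f (ζs j)).toReal : ℝ) : EReal) :=
      (EReal.coe_toReal (hfin j) (hfbot _)).symm
    rw [h3] at h2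
    calc ((⟪a, ξ⟫ + b : ℝ) : EReal) ≤ ((⟪a, ζs j⟫ + b : ℝ) : EReal) := EReal.coe_le_coe_iff.2 hlez
      _ ≤ (((f (ζs j)).toReal : ℝ) : EReal) := h2
      _ ≤ (M : EReal) := by
          refine EReal.coe_le_coe_iff.2 ?_
          exact Finset.le_sup' (fun j => (f (ζs j)).toReal) (Finset.mem_univ j)
  exact ((lt_of_le_of_lt hle (EReal.coe_lt_top M)).ne)

lemma convEnv_convexOn {N : ℕ} (f : Euc N → EReal) (g : Euc N → ℝ)
    (hg : ∀ x, convEnv f x = ((g x : ℝ) : EReal)) : ConvexOn ℝ Set.univ g := by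
  refine ⟨convex_univ, ?_⟩
  intro x _ y _ p q hp hq hpq
  have key : convEnv f (p • x + q • y) ≤ ((p * g x + q * g y : ℝ) : EReal) := by
    refine sSup_le ?_
    rintro z ⟨a, b, hab, rfl⟩
    have h1 : ⟪a, x⟫ + b ≤ g x :=
      EReal.coe_le_coe_iff.1 (by rw [← hg x]; exact affine_le_convEnv f a b hab x)
    have h2 : ⟪a, y⟫ + b ≤ g y :=
      EReal.coe_le_coe_iff.1 (by rw [← hg y]; exact affine_le_convEnv f a b hab y)
    refine EReal.coe_le_coe_iff.2 ?_
    have h3 : ⟪a, p • x + q • y⟫ = p * ⟪a, x⟫ + q * ⟪a, y⟫ := by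
      rw [inner_add_right, real_inner_smul_right, real_inner_smul_right]
    have hb : p * b + q * b = b := by rw [← add_mul, hpq, one_mul]
    have e1 : p * (⟪a, x⟫ + b) ≤ p * g x := mul_le_mul_of_nonneg_left h1 hp
    have e2 : q * (⟪a, y⟫ + b) ≤ q * g y := mul_le_mul_of_nonneg_left h2 hq
    rw [h3]; nlinarith
  rw [hg (p • x + q • y)] at key
  simpa using EReal.coe_le_coe_iff.1 key

lemma erealCoeSum {ι : Type*} (s : Finset ι) (r : ι → ℝ) :
    ((∑ i ∈ s, r i : ℝ) : EReal) = ∑ i ∈ s, ((r i : ℝ) : EReal) :=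
  map_sum (⟨⟨Real.toEReal, EReal.coe_zero⟩, EReal.coe_add⟩ : ℝ →+ EReal) r s

lemma erealSumNeBot {ι : Type*} (s : Finset ι) (F : ι → EReal)
    (h : ∀ i ∈ s, F i ≠ ⊥) : ∑ i ∈ s, F i ≠ ⊥ := by
  classical
  induction s using Finset.cons_induction with
  | empty => simp
  | cons a s ha ih =>
    rw [Finset.sum_cons]
    intro hbot
    rcases EReal.add_eq_bot_iff.1 hbot with h1 | h1
    · exact h a (Finset.mem_cons_self a s) h1
    · exact ih (fun i hi => h i (Finset.mem_cons_of_mem hi)) h1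

/-- Lemma 2.4 (b): under assumption (HF), if `ξ` is a strictly positive convex combination of
`ξ₁, …, ξ_{k+1}` along which the values of `f` average to `f**(ξ)`, then `f(ξᵢ) = f**(ξᵢ)`
for every `i` and there is a common subgradient `a ∈ ∂f**(ξ) ∩ ⋂ᵢ ∂f**(ξᵢ)`. -/
theorem stmt5 {N : ℕ} (f : Euc N → EReal) (hfmeas : Measurable f) (hfbot : ∀ ζ, f ζ ≠ ⊥)
    (hf : HF f) (ξ : Euc N) (k : ℕ) (hk : 1 ≤ k) (hkN : k ≤ N)
    (ξs : Fin (k + 1) → Euc N) (α : Fin (k + 1) → ℝ)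
    (hpos : ∀ i, 0 < α i) (hsum : ∑ i, α i = 1) (hcomb : ∑ i, α i • ξs i = ξ)
    (hval : ∑ i, ((α i : EReal) * f (ξs i)) = convEnv f ξ) :
    (∀ i, f (ξs i) = convEnv f (ξs i)) ∧
    ∃ a : Euc N, a ∈ subdiffE (convEnv f) ξ ∧
      ∀ i, a ∈ subdiffE (convEnv f) (ξs i) := by
  obtain ⟨⟨c₁, hc₁, c₂, hgrowth⟩, hii, hiii⟩ := hf
  have hnb : ∀ x : Euc N, convEnv f x ≠ ⊥ := convEnv_ne_bot f c₁ c₂ hc₁ hgrowth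
  have hnt : ∀ x : Euc N, convEnv f x ≠ ⊤ := by
    intro x
    obtain ⟨ζs, hball, hζ⟩ := hiii (‖x‖ + 1) (by positivity)
    exact convEnv_ne_top f hfbot x ζs hball (fun j => (hζ j).2)
  set g : Euc N → ℝ := fun x => (convEnv f x).toReal with hgdef
  have hg : ∀ x, convEnv f x = ((g x : ℝ) : EReal) :=
    fun x => (EReal.coe_toReal (hnt x) (hnb x)).symm
  -- Step A : the values `f (ξs i)` are finite
  have hftop : ∀ i, f (ξs i) ≠ ⊤ := by
    intro i hi
    have hterm : ∀ j, ((α j : EReal) * f (ξs j)) ≠ ⊥ := by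
      intro j
      by_cases h : f (ξs j) = ⊤
      · rw [h, EReal.coe_mul_top_of_pos (hpos j)]; simp
      · rw [(EReal.coe_toReal h (hfbot _)).symm, ← EReal.coe_mul]
        exact EReal.coe_ne_bot _
    have htot : ∑ j, ((α j : EReal) * f (ξs j)) = ⊤ := by
      rw [← Finset.add_sum_erase _ _ (Finset.mem_univ i), hi,
        EReal.coe_mul_top_of_pos (hpos i)]
      exact EReal.top_add_of_ne_bot
        (erealSumNeBot _ _ (fun j _ => hterm j))
    rw [hval] at htot
    exact hnt ξ htot
  -- Step B : translate everything to real numbers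
  set r : Fin (k+1) → ℝ := fun i => (f (ξs i)).toReal with hrdef
  have hr : ∀ i, f (ξs i) = ((r i : ℝ) : EReal) :=
    fun i => (EReal.coe_toReal (hftop i) (hfbot _)).symm
  have hsum_r : ∑ i, α i * r i = g ξ := by
    have h1 : ((∑ i, α i * r i : ℝ) : EReal) = ((g ξ : ℝ) : EReal) := by
      rw [erealCoeSum, ← hg ξ, ← hval]
      refine Finset.sum_congr rfl fun i _ => ?_
      rw [EReal.coe_mul, ← hr i]
    exact EReal.coe_eq_coe_iff.1 h1
  have hconv : ConvexOn ℝ Set.univ g := convEnv_convexOn f g hg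
  have hjensen : g ξ ≤ ∑ i, α i * g (ξs i) := by
    have := hconv.map_sum_le (p := ξs) (fun i _ => (hpos i).le) hsum (fun i _ => mem_univ _)
    rwa [hcomb] at this
  have hle : ∀ i, g (ξs i) ≤ r i := fun i =>
    EReal.coe_le_coe_iff.1 (by rw [← hg, ← hr]; exact convEnv_le f (ξs i))
  have hsumz : ∑ i, α i * (r i - g (ξs i)) = 0 := by
    have expand : ∑ i, α i * (r i - g (ξs i))
        = (∑ i, α i * r i) - ∑ i, α i * g (ξs i) := by
      rw [← Finset.sum_sub_distrib]
      exact Finset.sum_congr rfl fun i _ => by ring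
    have h2 : ∑ i, α i * g (ξs i) ≤ ∑ i, α i * r i :=
      Finset.sum_le_sum fun i _ => mul_le_mul_of_nonneg_left (hle i) (hpos i).le
    rw [hsum_r] at h2
    rw [expand, hsum_r]
    linarith
  have hzero := (Finset.sum_eq_zero_iff_of_nonneg
    (fun i _ => mul_nonneg (hpos i).le (by linarith [hle i]))).1 hsumz
  have hgr : ∀ i, g (ξs i) = r i := by
    intro i
    have h1 := hzero i (Finset.mem_univ i)
    have h2 := (mul_eq_zero.1 h1).resolve_left (hpos i).ne'
    linarith
  have part1 : ∀ i, f (ξs i) = convEnv f (ξs i) := by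
    intro i
    rw [hr i, hg (ξs i), hgr i]
  have hgsum : ∑ i, α i * g (ξs i) = g ξ := by
    rw [Finset.sum_congr rfl fun i _ => by rw [hgr i]]
    exact hsum_r
  -- Step D : common subgradient
  obtain ⟨a, ha⟩ := exists_subgradient g hconv ξ
  refine ⟨part1, a, ?_, ?_⟩
  · intro ζ
    rw [hg ξ, hg ζ, ← EReal.coe_add]
    exact EReal.coe_le_coe_iff.2 (ha ζ)
  · have hinner : ∑ i, α i * ⟪a, ξs i - ξ⟫ = 0 := by
      have h1 : ⟪a, ∑ i, α i • (ξs i - ξ)⟫ = ∑ i, α i * ⟪a, ξs i - ξ⟫ := by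
        rw [inner_sum]
        exact Finset.sum_congr rfl fun i _ => real_inner_smul_right a _ (α i)
      have h2 : ∑ i, α i • (ξs i - ξ) = 0 := by
        have : ∑ i, α i • (ξs i - ξ) = (∑ i, α i • ξs i) - ∑ i, α i • ξ := by
          rw [← Finset.sum_sub_distrib]
          exact Finset.sum_congr rfl fun i _ => smul_sub _ _ _
        rw [this, hcomb, ← Finset.sum_smul, hsum, one_smul, sub_self]
      rw [← h1, h2, inner_zero_right]
    have hterm_nonneg : ∀ i, 0 ≤ g (ξs i) - g ξ - ⟪a, ξs i - ξ⟫ := by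
      intro i; linarith [ha (ξs i)]
    have hsz : ∑ i, α i * (g (ξs i) - g ξ - ⟪a, ξs i - ξ⟫) = 0 := by
      have expand : ∀ i, α i * (g (ξs i) - g ξ - ⟪a, ξs i - ξ⟫)
          = α i * g (ξs i) - α i * g ξ - α i * ⟪a, ξs i - ξ⟫ := fun i => by ring
      rw [Finset.sum_congr rfl fun i _ => expand i, Finset.sum_sub_distrib,
        Finset.sum_sub_distrib, ← Finset.sum_mul, hsum, hgsum, hinner]
      ring
    have hzero2 := (Finset.sum_eq_zero_iff_of_nonneg
      (fun i _ => mul_nonneg (hpos i).le (hterm_nonneg i))).1 hsz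
    have heq : ∀ i, g (ξs i) = g ξ + ⟪a, ξs i - ξ⟫ := by
      intro i
      have h1 := hzero2 i (Finset.mem_univ i)
      have h2 := (mul_eq_zero.1 h1).resolve_left (hpos i).ne'
      linarith
    intro i ζ
    rw [hg (ξs i), hg ζ, ← EReal.coe_add]
    refine EReal.coe_le_coe_iff.2 ?_
    have h3 : ⟪a, ξs i - ξ⟫ + ⟪a, ζ - ξs i⟫ = ⟪a, ζ - ξ⟫ := by
      rw [← inner_add_right]
      congr 1
      abel
    have h4 := ha ζ
    rw [heq i]
    linarith
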